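/- arXiv:1412.8097 — 3 statements merged into one kernel-verified Lean document; each statement's English description precedes it below -/
import Mathlib

section
/- If G = (V,E) is a directed acyclic graph and G~ = (V,E~) is a minimum equivalent digraph of G (a reachability-equivalent subgraph with the fewest edges), then E~ is exactly the set of edges (u,v) in E such that there is no directed path from u to v in G avoiding the edge (u,v). -/
/-- Reachability in a digraph given by an edge finset. -/
def Reach {V : Type*} [DecidableEq V] (E : Finset (V × V)) (u v : V) : Prop :=
  Relation.ReflTransGen (fun a b => (a, b) ∈ E) u v

theorem reach_mono {V : Type*} [DecidableEq V] {E F : Finset (V × V)} (h : E ⊆ F) {u v : V} :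
    Reach E u v → Reach F u v :=
  fun hr => Relation.ReflTransGen.mono (show (fun a b : V => (a, b) ∈ E) ≤ (fun a b : V => (a, b) ∈ F) from fun a b hab => h hab) u v hr

theorem reach_antisymm {V : Type*} [DecidableEq V] {E : Finset (V × V)}
    (hac : ∀ u v : V, (u, v) ∈ E → ¬ Reach E v u) {a b : V}
    (h1 : Reach E a b) (h2 : Reach E b a) : a = b := by
  rcases h1.cases_head with h | ⟨c, hc, hcb⟩
  · exact h
  · exact absurd (hcb.trans h2) (hac a c hc)

/-- If there is an `Et`-path from `a` to `b` but none avoiding `e`, then every path goes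
through `e`. -/
theorem reach_through {V : Type*} [DecidableEq V] {Et : Finset (V × V)} {e : V × V} {a b : V}
    (h : Reach Et a b) (hn : ¬ Reach (Et.erase e) a b) :
    Reach Et a e.1 ∧ Reach Et e.2 b := by
  revert hn
  induction h using Relation.ReflTransGen.head_induction_on with
  | refl => intro hn; exact absurd Relation.ReflTransGen.refl hn
  | @head x c hedge hcb ih =>
    intro hn
    by_cases hx : (x, c) = e
    · refine ⟨?_, ?_⟩
      · have : x = e.1 := by rw [← hx]
        rw [← this]; exact Relation.ReflTransGen.refl
      · have : c = e.2 := by rw [← hx]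
        rw [← this]; exact hcb
    · by_cases hcv : Reach (Et.erase e) c b
      · exact absurd (Relation.ReflTransGen.head (Finset.mem_erase.mpr ⟨hx, hedge⟩) hcv) hn
      · obtain ⟨h1, h2⟩ := ih hcv
        exact ⟨Relation.ReflTransGen.head hedge h1, h2⟩

/-- If `e.1` reaches `e.2` avoiding `e`, then erasing `e` preserves reachability. -/
theorem reach_erase_of {V : Type*} [DecidableEq V] {Et : Finset (V × V)} {e : V × V}
    (hfe : Reach (Et.erase e) e.1 e.2) {a b : V} (h : Reach Et a b) :
    Reach (Et.erase e) a b := by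
  induction h using Relation.ReflTransGen.head_induction_on with
  | refl => exact Relation.ReflTransGen.refl
  | @head x c hedge hcb ih =>
    by_cases hx : (x, c) = e
    · have h1 : x = e.1 := by rw [← hx]
      have h2 : c = e.2 := by rw [← hx]
      rw [← h1, ← h2] at hfe
      exact hfe.trans ih
    · exact Relation.ReflTransGen.head (Finset.mem_erase.mpr ⟨hx, hedge⟩) ih

/-- In a DAG, a minimum equivalent digraph consists exactly of the edges `(u,v) ∈ E`
such that there is no directed path from `u` to `v` avoiding the edge `(u,v)`. -/
theorem stmt0 {V : Type*} [Fintype V] [DecidableEq V] (E Et : Finset (V × V))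
    (hacyclic : ∀ u v : V, (u, v) ∈ E → ¬ Reach E v u)
    (hsub : Et ⊆ E)
    (hequiv : ∀ u v : V, Reach Et u v ↔ Reach E u v)
    (hmin : ∀ F : Finset (V × V), F ⊆ E → (∀ u v : V, Reach F u v ↔ Reach E u v) →
      Et.card ≤ F.card) :
    ∀ e : V × V, e ∈ Et ↔ e ∈ E ∧ ¬ Reach (E.erase e) e.1 e.2 := by
  intro e
  constructor
  · intro he
    refine ⟨hsub he, ?_⟩
    intro hr
    -- `hr` : path from e.1 to e.2 in E avoiding e. Show Reach (Et.erase e) e.1 e.2.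
    have key : ∀ a : V, Reach (E.erase e) a e.2 → Reach E e.1 a →
        Reach (Et.erase e) a e.2 := by
      intro a h
      induction h using Relation.ReflTransGen.head_induction_on with
      | refl => intro _; exact Relation.ReflTransGen.refl
      | @head x c hedge hcb ih =>
        intro hux
        have hedgeE : (x, c) ∈ E := Finset.mem_erase.mp hedge |>.2
        have hne : (x, c) ≠ e := Finset.mem_erase.mp hedge |>.1
        have hstep : Reach (Et.erase e) x c := by
          by_contra hnxc
          have hxc : Reach Et x c := (hequiv x c).mpr (Relation.ReflTransGen.single hedgeE)
          obtain ⟨h1, h2⟩ := reach_through hxc hnxc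
          -- x reaches e.1 and e.2 reaches c, plus e.1 reaches x and c reaches e.2 in E
          have hx1 : x = e.1 := reach_antisymm hacyclic
            (reach_mono hsub h1) hux
          have hc2 : c = e.2 := reach_antisymm hacyclic
            (reach_mono (Finset.erase_subset e E) hcb)
            (reach_mono hsub h2)
          exact hne (by rw [hx1, hc2])
        exact hstep.trans (ih (hux.trans (Relation.ReflTransGen.single hedgeE)))
    have hfe : Reach (Et.erase e) e.1 e.2 := key e.1 hr Relation.ReflTransGen.refl
    -- Now Et.erase e is also equivalent, contradicting minimality.
    have hFequiv : ∀ u v : V, Reach (Et.erase e) u v ↔ Reach E u v := by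
      intro u v
      constructor
      · intro h
        exact reach_mono (fun f hf => hsub (Finset.mem_of_mem_erase hf)) h
      · intro h
        exact reach_erase_of hfe ((hequiv u v).mpr h)
    have := hmin (Et.erase e) (fun f hf => hsub (Finset.mem_of_mem_erase hf)) hFequiv
    have hlt : (Et.erase e).card < Et.card := Finset.card_erase_lt_of_mem he
    omega
  · rintro ⟨heE, hnr⟩
    by_contra hne
    have h1 : Reach Et e.1 e.2 := (hequiv e.1 e.2).mpr (Relation.ReflTransGen.single heE)
    have hEtsub : Et ⊆ E.erase e := fun f hf =>
      Finset.mem_erase.mpr ⟨fun h => hne (h ▸ hf), hsub hf⟩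
    exact hnr (reach_mono hEtsub h1)
end

section
/- Let G = (V,E) be a digraph with no isolated vertices, m edges, and relative edge connectivity k (the minimum number of edges whose removal changes the reachability relation). Then G has a reachability-equivalent subgraph with at most 5m/k edges. -/
namespace RE
set_option linter.unusedSectionVars false

open Finset

variable {V : Type*} [Fintype V] [DecidableEq V]

lemma reach_mono {F G : Finset (V × V)} (h : F ⊆ G) {u v : V} (hr : Reach F u v) :
    Reach G u v :=
  Relation.ReflTransGen.mono (fun _ _ hab => h hab) u v hr

/-- Same strongly connected class. -/
def Scc (E : Finset (V × V)) (u v : V) : Prop := Reach E u v ∧ Reach E v u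

lemma scc_refl (E : Finset (V × V)) (v : V) : Scc E v v :=
  ⟨Relation.ReflTransGen.refl, Relation.ReflTransGen.refl⟩

lemma scc_symm {E : Finset (V × V)} {u v : V} (h : Scc E u v) : Scc E v u := ⟨h.2, h.1⟩

lemma scc_trans {E : Finset (V × V)} {u v w : V} (h1 : Scc E u v) (h2 : Scc E v w) :
    Scc E u w := ⟨h1.1.trans h2.1, h2.2.trans h1.2⟩

open Classical in
noncomputable def classOf (E : Finset (V × V)) (v : V) : Finset V :=
  univ.filter (fun u => Scc E v u)

open Classical in
lemma mem_classOf {E : Finset (V × V)} {u v : V} : u ∈ classOf E v ↔ Scc E v u := by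
  simp [classOf]

lemma self_mem_classOf (E : Finset (V × V)) (v : V) : v ∈ classOf E v :=
  mem_classOf.2 (scc_refl E v)

lemma classOf_eq {E : Finset (V × V)} {u v : V} (h : Scc E u v) :
    classOf E u = classOf E v := by
  ext x
  simp only [mem_classOf]
  exact ⟨fun hx => scc_trans (scc_symm h) hx, fun hx => scc_trans h hx⟩

noncomputable def rep (E : Finset (V × V)) (v : V) : V :=
  ((classOf E v).toList.head?).getD v

lemma rep_mem (E : Finset (V × V)) (v : V) : rep E v ∈ classOf E v := by
  have hne : (classOf E v).toList ≠ [] := by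
    intro h
    have := self_mem_classOf E v
    rw [Finset.toList_eq_nil.1 h] at this
    exact absurd this (Finset.notMem_empty v)
  rw [rep, List.head?_eq_head hne]
  simpa using Finset.mem_toList.1 (List.head_mem hne)

lemma scc_rep_self (E : Finset (V × V)) (v : V) : Scc E v (rep E v) :=
  mem_classOf.1 (rep_mem E v)

lemma rep_eq_of_scc {E : Finset (V × V)} {u v : V} (h : Scc E u v) :
    rep E u = rep E v := by
  have hc : classOf E u = classOf E v := classOf_eq h
  have hne : (classOf E u).toList ≠ [] := by
    intro hnil
    have := self_mem_classOf E u
    rw [Finset.toList_eq_nil.1 hnil] at this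
    exact absurd this (Finset.notMem_empty u)
  rw [rep, rep, ← hc, List.head?_eq_head hne]
  simp

lemma rep_idem (E : Finset (V × V)) (v : V) : rep E (rep E v) = rep E v :=
  rep_eq_of_scc (scc_symm (scc_rep_self E v))

/-- Frontier lemma: on a path from a Q-vertex to a non-Q-vertex there is an edge crossing. -/
lemma frontier {P : V → V → Prop} {Q : V → Prop} {a b : V}
    (h : Relation.ReflTransGen P a b) (ha : Q a) (hb : ¬ Q b) :
    ∃ x y, P x y ∧ Q x ∧ ¬ Q y ∧ Relation.ReflTransGen P a x ∧ Relation.ReflTransGen P y b := by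
  induction h with
  | refl => exact absurd ha hb
  | @tail c d hac hcd ih =>
    by_cases hQ : Q c
    · exact ⟨c, d, hcd, hQ, hb, hac, Relation.ReflTransGen.refl⟩
    · obtain ⟨x, y, h1, h2, h3, h4, h5⟩ := ih hQ
      exact ⟨x, y, h1, h2, h3, h4, h5.tail hcd⟩

open Classical in
/-- Spanning tree lemma. -/
lemma tree (EC : Finset (V × V)) (r : V) :
    ∃ F, F ⊆ EC ∧ F.card ≤ (univ.filter fun v => Reach EC r v).card ∧
      ∀ v, Reach EC r v → Reach F r v := by
  suffices h : ∀ n (F : Finset (V × V)), F ⊆ EC →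
      (univ.filter fun v => Reach EC r v).card ≤ (univ.filter fun v => Reach F r v).card + n →
      ∃ F', F' ⊆ EC ∧ F'.card ≤ F.card + n ∧ ∀ v, Reach EC r v → Reach F' r v by
    obtain ⟨F', h1, h2, h3⟩ := h (univ.filter fun v => Reach EC r v).card ∅ (empty_subset _)
      (Nat.le_add_left _ _)
    exact ⟨F', h1, by simpa using h2, h3⟩
  intro n
  induction n with
  | zero =>
    intro F hFE hcard
    refine ⟨F, hFE, Nat.le_add_right _ _, ?_⟩
    have hsub : (univ.filter fun v => Reach F r v) ⊆ (univ.filter fun v => Reach EC r v) := by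
      intro v hv
      simp only [mem_filter, mem_univ, true_and] at hv ⊢
      exact reach_mono hFE hv
    have heq := Finset.eq_of_subset_of_card_le hsub (by simpa using hcard)
    intro v hv
    have : v ∈ (univ.filter fun v => Reach F r v) := by
      rw [heq]; simp only [mem_filter, mem_univ, true_and]; exact hv
    simpa using this
  | succ n ih =>
    intro F hFE hcard
    by_cases hall : ∀ v, Reach EC r v → Reach F r v
    · exact ⟨F, hFE, Nat.le_add_right _ _, hall⟩
    · push_neg at hall
      obtain ⟨v, hv, hnv⟩ := hall
      obtain ⟨x, y, hxy, hQx, hQy, -, -⟩ :=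
        frontier (Q := fun z => Reach F r z) hv Relation.ReflTransGen.refl hnv
      have h1 : insert (x, y) F ⊆ EC := insert_subset hxy hFE
      have hreachy : Reach (insert (x, y) F) r y :=
        (reach_mono (subset_insert _ _) hQx).tail (mem_insert_self _ _)
      have hss : (univ.filter fun z => Reach F r z) ⊂
          (univ.filter fun z => Reach (insert (x, y) F) r z) := by
        constructor
        · intro z hz
          simp only [mem_filter, mem_univ, true_and] at hz ⊢
          exact reach_mono (subset_insert _ _) hz
        · intro hcon
          have := hcon (by simp only [mem_filter, mem_univ, true_and]; exact hreachy)
          simp only [mem_filter, mem_univ, true_and] at this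
          exact hQy this
      have hlt := Finset.card_lt_card hss
      obtain ⟨F', h1', h2', h3'⟩ := ih (insert (x, y) F) h1 (by omega)
      refine ⟨F', h1', ?_, h3'⟩
      have := Finset.card_insert_le (x, y) F
      omega

open Classical in
/-- Paths between vertices of the same class stay within the class. -/
lemma reach_in_class (E : Finset (V × V)) (r : V) {v : V} (hv : Scc E r v) :
    ∀ a, Reach E a v → Scc E r a →
      Reach (E.filter fun e => Scc E r e.1 ∧ Scc E r e.2) a v := by
  intro a hav
  induction hav using Relation.ReflTransGen.head_induction_on with
  | refl => exact fun _ => Relation.ReflTransGen.refl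
  | head hac hcv ih =>
    rename_i a' c
    intro ha
    have hc : Scc E r c :=
      ⟨ha.1.trans (Relation.ReflTransGen.single hac), hcv.trans hv.2⟩
    exact Relation.ReflTransGen.head (Finset.mem_filter.2 ⟨hac, ha, hc⟩) (ih hc)

lemma mem_image_swap {F : Finset (V × V)} {a b : V} :
    (a, b) ∈ F.image Prod.swap ↔ (b, a) ∈ F := by
  constructor
  · intro h
    obtain ⟨⟨p, q⟩, hpq, heq⟩ := Finset.mem_image.1 h
    simp only [Prod.swap_prod_mk, Prod.mk.injEq] at heq
    obtain ⟨rfl, rfl⟩ := heq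
    exact hpq
  · intro h
    exact Finset.mem_image.2 ⟨(b, a), h, rfl⟩

lemma reach_swap (F : Finset (V × V)) {u v : V} :
    Reach (F.image Prod.swap) u v ↔ Reach F v u := by
  constructor
  · intro h
    induction h with
    | refl => exact Relation.ReflTransGen.refl
    | tail _ hbc ih => exact Relation.ReflTransGen.head (mem_image_swap.1 hbc) ih
  · intro h
    induction h with
    | refl => exact Relation.ReflTransGen.refl
    | tail _ hbc ih => exact Relation.ReflTransGen.head (mem_image_swap.2 hbc) ih

end RE
set_option maxHeartbeats 1000000 in
open Finset RE in
/-- A digraph with no isolated vertices, `m` edges and relative edge connectivity `k`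
has a reachability-equivalent subgraph with at most `5m/k` edges. -/
theorem stmt2 {V : Type*} [Fintype V] [DecidableEq V] (E : Finset (V × V)) (k : ℕ)
    (hnoiso : ∀ v : V, ∃ e ∈ E, e.1 = v ∨ e.2 = v)
    (hrec : ∃ S : Finset (V × V), S ⊆ E ∧ S.card = k ∧
      ¬ (∀ u v : V, Reach (E \ S) u v ↔ Reach E u v))
    (hrecmin : ∀ S : Finset (V × V), S ⊆ E →
      (¬ (∀ u v : V, Reach (E \ S) u v ↔ Reach E u v)) → k ≤ S.card) :
    ∃ Et : Finset (V × V), Et ⊆ E ∧ (∀ u v : V, Reach Et u v ↔ Reach E u v) ∧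
      (Et.card : ℝ) ≤ 5 * E.card / k := by
  classical
  obtain ⟨S0, hS0E, hS0k, hS0ne⟩ := hrec
  have hk1 : 1 ≤ k := by
    rcases Nat.eq_zero_or_pos k with h0 | h; swap
    · exact h
    · exfalso
      have hS0 : S0 = ∅ := Finset.card_eq_zero.1 (by omega)
      subst hS0
      exact hS0ne (fun u v => by rw [Finset.sdiff_empty])
  -- notation
  set rp : V → V := RE.rep E with hrp
  set C : V → Finset V := fun ρ => RE.classOf E ρ with hC
  set EC : V → Finset (V × V) :=
    (fun ρ => E.filter fun e => RE.Scc E ρ e.1 ∧ RE.Scc E ρ e.2) with hEC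
  -- reachable set of EC ρ from ρ is within the class
  have hECreach : ∀ ρ : V, (univ.filter fun v => Reach (EC ρ) ρ v) ⊆ C ρ := by
    intro ρ v hv
    simp only [mem_filter, mem_univ, true_and] at hv
    rw [hC, RE.mem_classOf]
    induction hv with
    | refl => exact RE.scc_refl E ρ
    | tail _ hbc _ =>
      rw [hEC] at hbc
      exact (Finset.mem_filter.1 hbc).2.2
  have hECreach' : ∀ ρ : V, (univ.filter fun v => Reach ((EC ρ).image Prod.swap) ρ v) ⊆ C ρ := by
    intro ρ v hv
    simp only [mem_filter, mem_univ, true_and] at hv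
    rw [hC, RE.mem_classOf]
    induction hv with
    | refl => exact RE.scc_refl E ρ
    | tail _ hbc _ =>
      have := RE.mem_image_swap.1 hbc
      rw [hEC] at this
      exact (Finset.mem_filter.1 this).2.1
  -- trees
  have treeOut : ∀ ρ : V, ∃ F, F ⊆ EC ρ ∧ F.card ≤ (C ρ).card ∧
      ∀ v ∈ C ρ, Reach F ρ v := by
    intro ρ
    obtain ⟨F, h1, h2, h3⟩ := RE.tree (EC ρ) ρ
    refine ⟨F, h1, h2.trans (Finset.card_le_card (hECreach ρ)), fun v hv => ?_⟩
    rw [hC, RE.mem_classOf] at hv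
    exact h3 v (RE.reach_in_class E ρ hv ρ hv.1 (RE.scc_refl E ρ))
  have treeIn : ∀ ρ : V, ∃ F, F ⊆ EC ρ ∧ F.card ≤ (C ρ).card ∧
      ∀ v ∈ C ρ, Reach F v ρ := by
    intro ρ
    obtain ⟨F, h1, h2, h3⟩ := RE.tree ((EC ρ).image Prod.swap) ρ
    refine ⟨F.image Prod.swap, ?_, ?_, ?_⟩
    · rintro ⟨a, b⟩ hab
      exact RE.mem_image_swap.1 (h1 (RE.mem_image_swap.1 hab))
    · exact (Finset.card_image_le).trans (h2.trans (Finset.card_le_card (hECreach' ρ)))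
    · intro v hv
      rw [RE.reach_swap]
      apply h3
      rw [RE.reach_swap]
      rw [hC, RE.mem_classOf] at hv
      exact RE.reach_in_class E ρ (RE.scc_refl E ρ) v hv.2 hv
  choose Fout hFoutE hFoutCard hFout using treeOut
  choose Fin hFinE hFinCard hFin using treeIn
  -- nontrivial vertices and representative set
  set Nt : Finset V := univ.filter (fun v => ∃ w, w ≠ v ∧ RE.Scc E v w) with hNt
  set Reps : Finset V := univ.filter (fun ρ => rp ρ = ρ ∧ ∃ w, w ≠ ρ ∧ RE.Scc E ρ w) with hReps
  -- strict order and covering pairs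
  set strict : V → V → Prop := fun a b => Reach E a b ∧ ¬ Reach E b a with hstrict
  set P : Finset (V × V) := (univ ×ˢ univ).filter (fun p =>
      rp p.1 = p.1 ∧ rp p.2 = p.2 ∧ strict p.1 p.2 ∧ ∀ c, ¬(strict p.1 c ∧ strict c p.2))
    with hP
  have hPmem : ∀ p : V × V, p ∈ P ↔ rp p.1 = p.1 ∧ rp p.2 = p.2 ∧ strict p.1 p.2 ∧
      ∀ c, ¬(strict p.1 c ∧ strict c p.2) := by
    intro p; rw [hP]; simp [Finset.mem_filter]
  -- crossing edge y in the class of σ on any path avoiding only classes ρ, σ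
  have hcross : ∀ p : V × V, p ∈ P → ∀ x y : V, (x, y) ∈ E → RE.Scc E p.1 x →
      ¬ RE.Scc E p.1 y → Reach E y p.2 → RE.Scc E p.2 y := by
    intro p hp x y hxyE hQx hQy hsuf
    obtain ⟨-, -, hst, hnc⟩ := (hPmem p).1 hp
    have hry : Reach E p.1 y := hQx.1.trans (Relation.ReflTransGen.single hxyE)
    have h1 : strict p.1 y := ⟨hry, fun hyr => hQy ⟨hry, hyr⟩⟩
    have h2 : ¬ strict y p.2 := fun h2 => hnc y ⟨h1, h2⟩
    simp only [hstrict] at h2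
    push_neg at h2
    exact ⟨h2 hsuf, hsuf⟩
  -- cov edge existence
  have covex : ∀ p, p ∈ P → ∃ e : V × V, e ∈ E ∧ RE.Scc E p.1 e.1 ∧ RE.Scc E p.2 e.2 := by
    intro p hp
    obtain ⟨-, -, hst, -⟩ := (hPmem p).1 hp
    have hnQσ : ¬ RE.Scc E p.1 p.2 := fun h => hst.2 h.2
    obtain ⟨x, y, hxy, hQx, hQy, -, hsuf⟩ :=
      RE.frontier (Q := fun z => RE.Scc E p.1 z) hst.1 (RE.scc_refl E p.1) hnQσ
    exact ⟨(x, y), hxy, hQx, hcross p hp x y hxy hQx hQy hsuf⟩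
  choose ce hce1 hce2 hce3 using covex
  set covE : Finset (V × V) := P.attach.image (fun q => ce q.1 q.2) with hcovE
  set Et : Finset (V × V) := (Reps.biUnion fun ρ => Fout ρ ∪ Fin ρ) ∪ covE with hEt
  -- Et ⊆ E
  have hECE : ∀ ρ, EC ρ ⊆ E := fun ρ => by rw [hEC]; exact Finset.filter_subset _ _
  have hEtE : Et ⊆ E := by
    rw [hEt]
    apply Finset.union_subset
    · apply Finset.biUnion_subset.2
      intro ρ _
      exact Finset.union_subset ((hFoutE ρ).trans (hECE ρ)) ((hFinE ρ).trans (hECE ρ))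
    · rw [hcovE]
      intro e he
      obtain ⟨⟨q, hq⟩, -, rfl⟩ := Finset.mem_image.1 he
      exact hce1 q hq
  -- same-class reachability in Et
  have hFoutEt : ∀ ρ ∈ Reps, Fout ρ ⊆ Et := by
    intro ρ hρ
    rw [hEt]
    exact (Finset.subset_union_left.trans
      (Finset.subset_biUnion_of_mem (fun ρ => Fout ρ ∪ Fin ρ) hρ)).trans
      Finset.subset_union_left
  have hFinEt : ∀ ρ ∈ Reps, Fin ρ ⊆ Et := by
    intro ρ hρ
    rw [hEt]
    exact (Finset.subset_union_right.trans
      (Finset.subset_biUnion_of_mem (fun ρ => Fout ρ ∪ Fin ρ) hρ)).trans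
      Finset.subset_union_left
  have sccReach : ∀ a b : V, RE.Scc E a b → Reach Et a b := by
    intro a b hab
    by_cases h : a = b
    · subst h; exact Relation.ReflTransGen.refl
    · have hra : RE.Scc E (rp a) a := RE.scc_symm (RE.scc_rep_self E a)
      have hrb : RE.Scc E (rp a) b := RE.scc_trans hra hab
      have hρ : rp a ∈ Reps := by
        rw [hReps]
        simp only [mem_filter, mem_univ, true_and]
        refine ⟨RE.rep_idem E a, ?_⟩
        by_cases ha : a = rp a
        · exact ⟨b, fun hb => h (ha.trans hb.symm), hrb⟩
        · exact ⟨a, ha, hra⟩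
      have h1 : Reach (Fin (rp a)) a (rp a) :=
        hFin (rp a) a (by rw [hC, RE.mem_classOf]; exact hra)
      have h2 : Reach (Fout (rp a)) (rp a) b :=
        hFout (rp a) b (by rw [hC, RE.mem_classOf]; exact hrb)
      exact (RE.reach_mono (hFinEt _ hρ) h1).trans (RE.reach_mono (hFoutEt _ hρ) h2)
  -- main reachability lemma
  have main : ∀ n : ℕ, ∀ a b : V,
      (univ.filter fun x => Reach E a x ∧ Reach E x b).card ≤ n →
      Reach E a b → Reach Et a b := by
    intro n
    induction n with
    | zero =>
      intro a b hcard hab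
      exfalso
      have : a ∈ univ.filter fun x => Reach E a x ∧ Reach E x b := by
        simp only [mem_filter, mem_univ, true_and]
        exact ⟨Relation.ReflTransGen.refl, hab⟩
      have := Finset.card_pos.2 ⟨a, this⟩
      omega
    | succ n ih =>
      intro a b hcard hab
      by_cases hba : Reach E b a
      · exact sccReach a b ⟨hab, hba⟩
      · set ρ := rp a with hρdef
        set σ := rp b with hσdef
        have haρ : RE.Scc E a ρ := RE.scc_rep_self E a
        have hbσ : RE.Scc E b σ := RE.scc_rep_self E b
        have hρσ : strict ρ σ := by
          rw [hstrict]
          constructor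
          · exact (haρ.2.trans hab).trans hbσ.1
          · intro hσρ
            exact hba ((hbσ.1.trans hσρ).trans haρ.2)
        by_cases hcov : ∀ c, ¬(strict ρ c ∧ strict c σ)
        · have hpP : (ρ, σ) ∈ P := by
            rw [hPmem]
            exact ⟨RE.rep_idem E a, RE.rep_idem E b, hρσ, hcov⟩
          set e := ce (ρ, σ) hpP with hedef
          have heE : e ∈ covE := by
            rw [hcovE]
            exact Finset.mem_image.2 ⟨⟨(ρ, σ), hpP⟩, Finset.mem_attach _ _, rfl⟩
          have heEt : e ∈ Et := by rw [hEt]; exact Finset.mem_union_right _ heE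
          have hstep : Reach Et e.1 e.2 := Relation.ReflTransGen.single (by
            have : (e.1, e.2) = e := rfl
            rw [this]; exact heEt)
          have h1 : Reach Et a e.1 := sccReach a e.1 (RE.scc_trans haρ (hce2 (ρ, σ) hpP))
          have h2 : Reach Et e.2 b :=
            sccReach e.2 b (RE.scc_symm (RE.scc_trans hbσ (hce3 (ρ, σ) hpP)))
          exact (h1.trans hstep).trans h2
        · push_neg at hcov
          obtain ⟨c, h1, h2⟩ := hcov
          rw [hstrict] at h1 h2
          have hac : Reach E a c := haρ.1.trans h1.1
          have hcb : Reach E c b := h2.1.trans hbσ.2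
          have d1 : (univ.filter fun x => Reach E a x ∧ Reach E x c).card ≤ n := by
            have hss : (univ.filter fun x => Reach E a x ∧ Reach E x c) ⊂
                (univ.filter fun x => Reach E a x ∧ Reach E x b) := by
              constructor
              · intro x hx
                simp only [mem_filter, mem_univ, true_and] at hx ⊢
                exact ⟨hx.1, hx.2.trans hcb⟩
              · intro hcon
                have hbmem := hcon (by
                  simp only [mem_filter, mem_univ, true_and]
                  exact ⟨hab, Relation.ReflTransGen.refl⟩)
                simp only [mem_filter, mem_univ, true_and] at hbmem
                exact h2.2 (hbσ.2.trans hbmem.2)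
            have := Finset.card_lt_card hss
            omega
          have d2 : (univ.filter fun x => Reach E c x ∧ Reach E x b).card ≤ n := by
            have hss : (univ.filter fun x => Reach E c x ∧ Reach E x b) ⊂
                (univ.filter fun x => Reach E a x ∧ Reach E x b) := by
              constructor
              · intro x hx
                simp only [mem_filter, mem_univ, true_and] at hx ⊢
                exact ⟨hac.trans hx.1, hx.2⟩
              · intro hcon
                have hamem := hcon (by
                  simp only [mem_filter, mem_univ, true_and]
                  exact ⟨Relation.ReflTransGen.refl, hab⟩)
                simp only [mem_filter, mem_univ, true_and] at hamem
                exact h1.2 (hamem.1.trans haρ.1)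
            have := Finset.card_lt_card hss
            omega
          exact (ih a c d1 hac).trans (ih c b d2 hcb)
  have hequiv : ∀ u v : V, Reach Et u v ↔ Reach E u v := by
    intro u v
    exact ⟨RE.reach_mono hEtE, fun h => main _ u v le_rfl h⟩
  -- counting: cut sets at each nontrivial vertex and at each covering pair
  set Su : V → Finset (V × V) :=
    (fun u => E.filter (fun e => e.1 = u ∧ RE.Scc E u e.2)) with hSu
  have hSuk : ∀ u ∈ Nt, k ≤ (Su u).card := by
    intro u hu
    rw [hNt] at hu
    simp only [mem_filter, mem_univ, true_and] at hu
    obtain ⟨w, hwu, hw⟩ := hu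
    refine hrecmin (Su u) (by rw [hSu]; exact Finset.filter_subset _ _) ?_
    intro hall
    have h2 : Reach (E \ Su u) u w := (hall u w).2 hw.1
    rcases Relation.ReflTransGen.cases_head h2 with heq | ⟨x, hx, hxw⟩
    · exact hwu heq.symm
    · have hxE := (Finset.mem_sdiff.1 hx).1
      have hscc : RE.Scc E u x := ⟨Relation.ReflTransGen.single hxE,
        (RE.reach_mono Finset.sdiff_subset hxw).trans hw.2⟩
      refine (Finset.mem_sdiff.1 hx).2 ?_
      rw [hSu]
      exact Finset.mem_filter.2 ⟨hxE, rfl, hscc⟩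
  set Ep : V × V → Finset (V × V) :=
    (fun p => E.filter (fun e => rp e.1 = p.1 ∧ rp e.2 = p.2)) with hEp
  have hEpk : ∀ p ∈ P, k ≤ (Ep p).card := by
    intro p hp
    obtain ⟨hr1, hr2, hst, hnc⟩ := (hPmem p).1 hp
    refine hrecmin (Ep p) (by rw [hEp]; exact Finset.filter_subset _ _) ?_
    intro hall
    rw [hstrict] at hst
    have h2 : Reach (E \ Ep p) p.1 p.2 := (hall p.1 p.2).2 hst.1
    have hnQ : ¬ RE.Scc E p.1 p.2 := fun h => hst.2 h.2
    obtain ⟨x, y, hxy, hQx, hQy, -, hsuf⟩ :=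
      RE.frontier (Q := fun z => RE.Scc E p.1 z) h2 (RE.scc_refl E p.1) hnQ
    have hxyE := (Finset.mem_sdiff.1 hxy).1
    have hsufE : Reach E y p.2 := RE.reach_mono Finset.sdiff_subset hsuf
    have hyσ : RE.Scc E p.2 y := hcross p hp x y hxyE hQx hQy hsufE
    refine (Finset.mem_sdiff.1 hxy).2 ?_
    rw [hEp]
    refine Finset.mem_filter.2 ⟨hxyE, ?_, ?_⟩
    · exact (RE.rep_eq_of_scc (RE.scc_symm hQx)).trans hr1
    · exact (RE.rep_eq_of_scc (RE.scc_symm hyσ)).trans hr2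
  have hd1 : ∀ u ∈ Nt, ∀ v ∈ Nt, u ≠ v → Disjoint (Su u) (Su v) := by
    intro u _ v _ huv
    rw [Finset.disjoint_left]
    intro e he1 he2
    rw [hSu] at he1 he2
    exact huv (((Finset.mem_filter.1 he1).2.1).symm.trans (Finset.mem_filter.1 he2).2.1)
  have hd2 : ∀ p ∈ P, ∀ q ∈ P, p ≠ q → Disjoint (Ep p) (Ep q) := by
    intro p _ q _ hpq
    rw [Finset.disjoint_left]
    intro e he1 he2
    rw [hEp] at he1 he2
    obtain ⟨-, h11, h12⟩ := Finset.mem_filter.1 he1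
    obtain ⟨-, h21, h22⟩ := Finset.mem_filter.1 he2
    exact hpq (Prod.ext (h11.symm.trans h21) (h12.symm.trans h22))
  have hsum1 : k * Nt.card ≤ (Nt.biUnion Su).card := by
    rw [Finset.card_biUnion hd1]
    calc k * Nt.card = ∑ _u ∈ Nt, k := by rw [Finset.sum_const, smul_eq_mul, mul_comm]
    _ ≤ ∑ u ∈ Nt, (Su u).card := Finset.sum_le_sum hSuk
  have hsum2 : k * P.card ≤ (P.biUnion Ep).card := by
    rw [Finset.card_biUnion hd2]
    calc k * P.card = ∑ _p ∈ P, k := by rw [Finset.sum_const, smul_eq_mul, mul_comm]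
    _ ≤ ∑ p ∈ P, (Ep p).card := Finset.sum_le_sum hEpk
  have hdisjU : Disjoint (Nt.biUnion Su) (P.biUnion Ep) := by
    rw [Finset.disjoint_left]
    intro e he1 he2
    obtain ⟨u, -, he1⟩ := Finset.mem_biUnion.1 he1
    obtain ⟨p, hpP, he2⟩ := Finset.mem_biUnion.1 he2
    rw [hSu] at he1
    rw [hEp] at he2
    obtain ⟨-, hu1, hu2⟩ := Finset.mem_filter.1 he1
    obtain ⟨-, hp1, hp2⟩ := Finset.mem_filter.1 he2
    have hee : rp e.1 = rp e.2 := by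
      apply RE.rep_eq_of_scc
      rw [hu1]
      exact hu2
    obtain ⟨-, -, hst, -⟩ := (hPmem p).1 hpP
    rw [hstrict] at hst
    have hne : p.1 ≠ p.2 := by
      intro h
      exact hst.2 (h ▸ hst.1)
    exact hne ((hp1.symm.trans (hee ▸ hp2)))
  have hcount : k * (Nt.card + P.card) ≤ E.card := by
    have hsub : (Nt.biUnion Su) ∪ (P.biUnion Ep) ⊆ E := by
      apply Finset.union_subset
      · exact Finset.biUnion_subset.2 fun u _ => by rw [hSu]; exact Finset.filter_subset _ _
      · exact Finset.biUnion_subset.2 fun p _ => by rw [hEp]; exact Finset.filter_subset _ _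
    have hcu := Finset.card_union_of_disjoint hdisjU
    have hle := Finset.card_le_card hsub
    have := Nat.mul_add k Nt.card P.card
    omega
  -- class sizes
  have hCd : ∀ ρ ∈ Reps, ∀ ρ' ∈ Reps, ρ ≠ ρ' → Disjoint (C ρ) (C ρ') := by
    intro ρ hρ ρ' hρ' hne
    rw [hReps] at hρ hρ'
    simp only [mem_filter, mem_univ, true_and] at hρ hρ'
    rw [Finset.disjoint_left]
    intro x hx1 hx2
    rw [hC, RE.mem_classOf] at hx1 hx2
    refine hne ?_
    calc ρ = rp ρ := hρ.1.symm
    _ = rp x := RE.rep_eq_of_scc hx1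
    _ = rp ρ' := (RE.rep_eq_of_scc hx2).symm
    _ = ρ' := hρ'.1
  have hCN : Reps.biUnion C ⊆ Nt := by
    intro x hx
    obtain ⟨ρ, hρ, hxρ⟩ := Finset.mem_biUnion.1 hx
    rw [hReps] at hρ
    simp only [mem_filter, mem_univ, true_and] at hρ
    obtain ⟨-, w, hwρ, hsccw⟩ := hρ
    rw [hC, RE.mem_classOf] at hxρ
    rw [hNt]
    simp only [mem_filter, mem_univ, true_and]
    by_cases hxeq : x = ρ
    · exact ⟨w, fun h => hwρ (h.trans hxeq), hxeq ▸ hsccw⟩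
    · exact ⟨ρ, fun h => hxeq h.symm, RE.scc_symm hxρ⟩
  have hCsum : ∑ ρ ∈ Reps, (C ρ).card ≤ Nt.card := by
    rw [← Finset.card_biUnion hCd]
    exact Finset.card_le_card hCN
  have hEtcard : Et.card ≤ 2 * Nt.card + P.card := by
    have h1 : (Reps.biUnion fun ρ => Fout ρ ∪ Fin ρ).card ≤ 2 * Nt.card := by
      calc (Reps.biUnion fun ρ => Fout ρ ∪ Fin ρ).card
          ≤ ∑ ρ ∈ Reps, (Fout ρ ∪ Fin ρ).card := Finset.card_biUnion_le
      _ ≤ ∑ ρ ∈ Reps, ((C ρ).card + (C ρ).card) := Finset.sum_le_sum (fun ρ _ =>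
          (Finset.card_union_le _ _).trans (add_le_add (hFoutCard ρ) (hFinCard ρ)))
      _ = 2 * ∑ ρ ∈ Reps, (C ρ).card := by
          rw [Finset.mul_sum]
          exact Finset.sum_congr rfl fun ρ _ => (two_mul _).symm
      _ ≤ 2 * Nt.card := Nat.mul_le_mul_left _ hCsum
    have h2 : covE.card ≤ P.card := by
      rw [hcovE]
      exact Finset.card_image_le.trans (by rw [Finset.card_attach])
    have h3 := Finset.card_union_le (Reps.biUnion fun ρ => Fout ρ ∪ Fin ρ) covE
    rw [hEt]
    omega
  have hfinal : Et.card * k ≤ 5 * E.card := by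
    have h5 : Et.card ≤ 2 * (Nt.card + P.card) := by omega
    calc Et.card * k ≤ (2 * (Nt.card + P.card)) * k := Nat.mul_le_mul_right _ h5
    _ = 2 * (k * (Nt.card + P.card)) := by ring
    _ ≤ 2 * E.card := Nat.mul_le_mul_left _ hcount
    _ ≤ 5 * E.card := Nat.mul_le_mul_right _ (by norm_num)
  refine ⟨Et, hEtE, hequiv, ?_⟩
  have hk0 : (0 : ℝ) < (k : ℝ) := by exact_mod_cast hk1
  rw [le_div_iff₀ hk0]
  exact_mod_cast hfinal
end

section
/- Every digraph G with at least one edge and chain-length R admits a walk of length strictly less than n², where n is the number of vertices, that visits exactly R distinct vertices and visits each vertex at most R times. -/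
/-- A (nonempty) walk in a digraph, given as the list of visited vertices. -/
def IsWalk {V : Type*} [DecidableEq V] (E : Finset (V × V)) (l : List V) : Prop :=
  l ≠ [] ∧ l.Chain' (fun a b => (a, b) ∈ E)

section Aux
variable {V : Type*} [DecidableEq V]

/-- split at first occurrence -/
lemma split_first {v : V} : ∀ {l : List V}, v ∈ l → ∃ a t, l = a ++ v :: t ∧ v ∉ a := by
  intro l h
  induction l with
  | nil => simp at h
  | cons x xs ih =>
    by_cases hx : x = v
    · exact ⟨[], xs, by simp [hx], by simp⟩
    · have hv : v ∈ xs := by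
        rcases List.mem_cons.1 h with h' | h'
        · exact absurd h'.symm hx
        · exact h'
      obtain ⟨a, t, rfl, ha⟩ := ih hv
      refine ⟨x :: a, t, by simp, ?_⟩
      intro hmem
      rcases List.mem_cons.1 hmem with h' | h'
      · exact hx h'.symm
      · exact ha h'

/-- Pigeonhole: either a cuttable loop exists, or many distinct non-`v` vertices. -/
lemma cut_or_many (v : V) : ∀ (m : ℕ) (l : List V), m + 1 ≤ l.count v →
    (∃ a b d, l = a ++ v :: (b ++ v :: d) ∧ ∀ x ∈ b, x ∈ a ∨ x = v ∨ x ∈ d) ∨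
    (∃ S : Finset V, S.card = m ∧ ∀ x ∈ S, x ≠ v ∧ x ∈ l) := by
  intro m
  induction m with
  | zero => intro l _; exact Or.inr ⟨∅, by simp, by simp⟩
  | succ m ih =>
    intro l hc
    have hv : v ∈ l := List.count_pos_iff.1 (by omega)
    obtain ⟨a, t, rfl, ha⟩ := split_first hv
    have hca : (a : List V).count v = 0 := List.count_eq_zero.2 ha
    have hct : t.count v ≥ m + 1 := by
      have h1 : (a ++ v :: t).count v = a.count v + (t.count v + 1) := by
        simp [List.count_append, List.count_cons]
      omega
    have hvt : v ∈ t := List.count_pos_iff.1 (by omega)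
    obtain ⟨b, d, rfl, hb⟩ := split_first hvt
    have hcb : (b : List V).count v = 0 := List.count_eq_zero.2 hb
    by_cases hgood : ∀ x ∈ b, x ∈ a ∨ x = v ∨ x ∈ d
    · exact Or.inl ⟨a, b, d, rfl, hgood⟩
    · push_neg at hgood
      obtain ⟨w, hwb, hwa, hwv, hwd⟩ := hgood
      have hcvd : m + 1 ≤ (v :: d).count v := by
        have h1 : (b ++ v :: d).count v = b.count v + (d.count v + 1) := by
          simp [List.count_append, List.count_cons]
        have h2 : (v :: d).count v = d.count v + 1 := by simp [List.count_cons]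
        omega
      rcases ih (v :: d) hcvd with h | ⟨S, hScard, hS⟩
      · -- lift the split
        obtain ⟨a', b', d', heq, hcond⟩ := h
        refine Or.inl ⟨a ++ v :: (b ++ a'), b', d', ?_, ?_⟩
        · rw [heq]; simp
        · intro x hx
          rcases hcond x hx with h1 | h2 | h3
          · exact Or.inl (by simp [h1])
          · exact Or.inr (Or.inl h2)
          · exact Or.inr (Or.inr h3)
      · refine Or.inr ⟨insert w S, ?_, ?_⟩
        · rw [Finset.card_insert_of_notMem, hScard]
          intro hwS
          rcases List.mem_cons.1 (hS w hwS).2 with h | h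
          · exact hwv h
          · exact hwd h
        · intro x hx
          rcases Finset.mem_insert.1 hx with rfl | hxS
          · exact ⟨hwv, by simp [hwb]⟩
          · refine ⟨(hS x hxS).1, ?_⟩
            have hxd : x ∈ v :: d := (hS x hxS).2
            rcases List.mem_cons.1 hxd with rfl | h
            · exact absurd rfl (hS x hxS).1
            · simp [h]

variable {E : Finset (V × V)}

/-- cutting a loop preserves walkness -/
lemma walk_cut {a b d : List V} {v : V}
    (h : IsWalk E (a ++ v :: (b ++ v :: d))) : IsWalk E (a ++ v :: d) := by
  obtain ⟨-, hch⟩ := h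
  refine ⟨by simp, ?_⟩
  simp only [List.Chain'] at hch ⊢
  rw [List.isChain_append] at hch ⊢
  obtain ⟨h1, h2, h3⟩ := hch
  refine ⟨h1, ?_, ?_⟩
  · have : (v :: (b ++ v :: d)) = (v :: b) ++ (v :: d) := by simp
    rw [this, List.isChain_append] at h2
    exact h2.2.1
  · intro x hx y hy
    refine h3 x hx y ?_
    simpa using hy

lemma walk_shorten (c : ℕ) (hc : 1 ≤ c) :
    ∀ l : List V, IsWalk E l → l.toFinset.card ≤ c → (∃ v, c + 1 ≤ l.count v) →
    ∃ l', IsWalk E l' ∧ l'.toFinset = l.toFinset ∧ l'.length < l.length := by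
  intro l hw hcard ⟨v, hv⟩
  rcases cut_or_many v c l hv with h | ⟨S, hScard, hS⟩
  · obtain ⟨a, b, d, rfl, hcond⟩ := h
    refine ⟨a ++ v :: d, walk_cut hw, ?_, by simp⟩
    ext x
    simp only [List.toFinset_append, List.toFinset_cons, Finset.mem_union, Finset.mem_insert,
      List.mem_toFinset]
    have := hcond x
    tauto
  · exfalso
    have hsub : insert v S ⊆ l.toFinset := by
      intro x hx
      rcases Finset.mem_insert.1 hx with rfl | hxS
      · exact List.mem_toFinset.2 (List.count_pos_iff.1 (by omega))
      · exact List.mem_toFinset.2 (hS x hxS).2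
    have hvS : v ∉ S := fun h => (hS v h).1 rfl
    have := Finset.card_le_card hsub
    rw [Finset.card_insert_of_notMem hvS, hScard] at this
    omega

lemma walk_bounded (c : ℕ) (hc : 1 ≤ c)
    (hall : ∀ m : List V, IsWalk E m → m.toFinset.card ≤ c) :
    ∀ (n : ℕ) (l : List V), l.length ≤ n → IsWalk E l →
    ∃ l', IsWalk E l' ∧ l'.toFinset = l.toFinset ∧ ∀ v, l'.count v ≤ c := by
  intro n
  induction n with
  | zero => intro l hl hw; exact absurd (List.length_eq_zero_iff.1 (by omega)) hw.1
  | succ n ih =>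
    intro l hl hw
    by_cases hcnt : ∀ v, l.count v ≤ c
    · exact ⟨l, hw, rfl, hcnt⟩
    · push_neg at hcnt
      obtain ⟨v, hv⟩ := hcnt
      obtain ⟨l'', hw'', hfs'', hlen''⟩ :=
        walk_shorten c hc l hw (hall l hw) ⟨v, by omega⟩
      obtain ⟨l', hw', hfs', hcnt'⟩ := ih l'' (by omega) hw''
      exact ⟨l', hw', hfs'.trans hfs'', hcnt'⟩

end Aux

/-- A digraph with at least one edge and chain-length `R` admits a walk of length `< n²`
visiting exactly `R` distinct vertices, each at most `R` times. -/
theorem stmt7 {V : Type*} [Fintype V] [DecidableEq V] (E : Finset (V × V)) (R : ℕ)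
    (hE : E.Nonempty)
    (hR1 : ∀ l : List V, IsWalk E l → l.toFinset.card ≤ R)
    (hR2 : ∃ l : List V, IsWalk E l ∧ l.toFinset.card = R) :
    ∃ l : List V, IsWalk E l ∧ l.length - 1 < (Fintype.card V) ^ 2 ∧
      l.toFinset.card = R ∧ ∀ v : V, l.count v ≤ R := by
  obtain ⟨l0, hw0, hcard0⟩ := hR2
  have hR1' : 1 ≤ R := by
    have : l0.toFinset.Nonempty := by
      rcases List.exists_mem_of_ne_nil l0 hw0.1 with ⟨x, hx⟩
      exact ⟨x, List.mem_toFinset.2 hx⟩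
    have := Finset.card_pos.2 this
    omega
  obtain ⟨l, hw, hfs, hcnt⟩ := walk_bounded R hR1' hR1 l0.length l0 le_rfl hw0
  have hcard : l.toFinset.card = R := by rw [hfs, hcard0]
  have hRn : R ≤ Fintype.card V := hcard ▸ Finset.card_le_univ l.toFinset
  have hlen : l.length ≤ R ^ 2 := by
    have hsum : ∑ v ∈ l.toFinset, l.count v = l.length := by
      simpa using Multiset.toFinset_sum_count_eq (l : Multiset V)
    calc l.length = ∑ v ∈ l.toFinset, l.count v := hsum.symm
      _ ≤ ∑ _v ∈ l.toFinset, R := Finset.sum_le_sum fun v _ => hcnt v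
      _ = R * R := by rw [Finset.sum_const, hcard, smul_eq_mul]
      _ = R ^ 2 := (sq R).symm
  refine ⟨l, hw, ?_, hcard, hcnt⟩
  have h1 : 1 ≤ R ^ 2 := Nat.one_le_pow _ _ (by omega)
  have : R ^ 2 ≤ (Fintype.card V) ^ 2 := Nat.pow_le_pow_left hRn 2
  omega
end
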